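/- Let p be a prime, k ≥ 1, n ≥ 0, d ∈ {0,…,p−1}, and 0 ≤ i ≤ k − 1. Let m ∈ ℕ^k with total(m) = p·n + d − i, and let j = n − total(⌊m/p⌋) where ⌊m/p⌋ is the entrywise floor. Then total(m mod p) = p·j + d − i and 0 ≤ j ≤ k − 1. -/

import Mathlib

theorem total_mod_p (p : ℕ) (hp : p.Prime) (k : ℕ) (hk : 1 ≤ k) (n d i : ℕ)
    (hd : d < p) (hi : i ≤ k - 1) (m : Fin k → ℕ)
    (htot : (∑ t, (m t : ℤ)) = p * n + d - i) :
    (∑ t, ((m t % p : ℕ) : ℤ)) = p * ((n : ℤ) - ∑ t, ((m t / p : ℕ) : ℤ)) + d - i ∧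
      0 ≤ (n : ℤ) - ∑ t, ((m t / p : ℕ) : ℤ) ∧
      (n : ℤ) - ∑ t, ((m t / p : ℕ) : ℤ) ≤ k - 1 := by
  have hp2 : (2 : ℤ) ≤ p := by exact_mod_cast hp.two_le
  set S := ∑ t, ((m t / p : ℕ) : ℤ) with hS
  set R := ∑ t, ((m t % p : ℕ) : ℤ) with hR
  have hdec : (∑ t, (m t : ℤ)) = p * S + R := by
    rw [hS, hR, Finset.mul_sum, ← Finset.sum_add_distrib]
    refine Finset.sum_congr rfl fun t _ => ?_
    exact_mod_cast (Nat.div_add_mod (m t) p).symm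
  have hRnn : 0 ≤ R := Finset.sum_nonneg fun t _ => Int.natCast_nonneg _
  have hRub : R ≤ k * ((p : ℤ) - 1) := by
    calc R ≤ ∑ _t : Fin k, ((p : ℤ) - 1) := by
            refine Finset.sum_le_sum fun t _ => ?_
            have := Nat.mod_lt (m t) hp.pos
            omega
      _ = k * ((p : ℤ) - 1) := by
            simp [Finset.sum_const, Finset.card_univ]; ring
  have hi' : (i : ℤ) ≤ (k : ℤ) - 1 := by omega
  have hd' : (d : ℤ) < p := by exact_mod_cast hd
  have hk' : (1 : ℤ) ≤ k := by exact_mod_cast hk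
  have heq : R = p * ((n : ℤ) - S) + d - i := by linarith [htot, hdec]
  refine ⟨heq, ?_, ?_⟩
  · by_contra h
    push_neg at h
    have : (n : ℤ) - S ≤ -1 := by omega
    nlinarith
  · by_contra h
    push_neg at h
    have : (k : ℤ) ≤ (n : ℤ) - S := by omega
    nlinarith
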